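/- arXiv:1803.07678 — 12 statements merged into one kernel-verified Lean document; each statement's English description precedes it below -/
import Mathlib

section
/- In a Hom-group, the inverse of any element is unique: if a*g = 1 and g*b = 1 for elements a, b, g, then a = b; moreover any two right inverses of g are equal and any two left inverses of g are equal. -/
/-- A Hom-group: a set `G` with a bijective twisting map `α` (given as an `Equiv`),
a binary operation `mul`, and a distinguished unit `one`, satisfying Hom-associativity,
multiplicativity of `α`, Hom-unitality, and existence of two-sided inverses. -/
structure HomGroup (G : Type*) where
  mul : G → G → G
  one : G
  α : G ≃ G
  hom_assoc : ∀ g h k, mul (α g) (mul h k) = mul (mul g h) (α k)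
  α_mul : ∀ g k, α (mul g k) = mul (α g) (α k)
  mul_one : ∀ g, mul g one = α g
  one_mul : ∀ g, mul one g = α g
  α_one : α one = one
  inv : G → G
  mul_inv : ∀ g, mul g (inv g) = one
  inv_mul : ∀ g, mul (inv g) g = one

/-- Uniqueness of inverses in a Hom-group: a left inverse and a right inverse of `g`
agree; moreover any two right inverses of `g` are equal and any two left inverses
of `g` are equal. -/
theorem homGroup_inverse_unique {G : Type*} (H : HomGroup G) (g : G) :
    (∀ a b, H.mul a g = H.one → H.mul g b = H.one → a = b) ∧
    (∀ a b, H.mul g a = H.one → H.mul g b = H.one → a = b) ∧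
    (∀ a b, H.mul a g = H.one → H.mul b g = H.one → a = b) := by
  have key : ∀ a b, H.mul a g = H.one → H.mul g b = H.one → a = b := by
    intro a b ha hb
    have : H.α (H.α a) = H.α (H.α b) := by
      calc H.α (H.α a) = H.mul (H.α a) H.one := (H.mul_one _).symm
        _ = H.mul (H.α a) (H.mul g b) := by rw [hb]
        _ = H.mul (H.mul a g) (H.α b) := H.hom_assoc a g b
        _ = H.mul H.one (H.α b) := by rw [ha]
        _ = H.α (H.α b) := H.one_mul _
    exact H.α.injective (H.α.injective this)
  refine ⟨key, ?_, ?_⟩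
  · intro a b ha hb
    rw [← key (H.inv g) a (H.inv_mul g) ha, key (H.inv g) b (H.inv_mul g) hb]
  · intro a b ha hb
    rw [key a (H.inv g) ha (H.mul_inv g), ← key b (H.inv g) hb (H.mul_inv g)]
end

section
/- In a Hom-group (G, α), for all a, b ∈ G the element b⁻¹a⁻¹ is a two-sided inverse of ab, i.e. (ab)(b⁻¹a⁻¹) = 1 and (b⁻¹a⁻¹)(ab) = 1. -/
/-- In a Hom-group, `b⁻¹ a⁻¹` is a two-sided inverse of `a b`. -/
theorem homGroup_mul_inv_rev {G : Type*} (H : HomGroup G) (a b : G) :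
    H.mul (H.mul a b) (H.mul (H.inv b) (H.inv a)) = H.one ∧
    H.mul (H.mul (H.inv b) (H.inv a)) (H.mul a b) = H.one := by
  constructor
  · apply H.α.injective
    have key : H.α (H.mul (H.mul a b) (H.mul (H.inv b) (H.inv a))) = H.one := by
      calc H.α (H.mul (H.mul a b) (H.mul (H.inv b) (H.inv a)))
          = H.mul (H.mul (H.α a) (H.α b)) (H.α (H.mul (H.inv b) (H.inv a))) := by
            rw [H.α_mul, H.α_mul]
        _ = H.mul (H.α (H.α a)) (H.mul (H.α b) (H.mul (H.inv b) (H.inv a))) :=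
            by rw [← H.hom_assoc (H.α a) (H.α b) (H.mul (H.inv b) (H.inv a))]
        _ = H.mul (H.α (H.α a)) (H.mul (H.mul b (H.inv b)) (H.α (H.inv a))) := by
            rw [H.hom_assoc b (H.inv b) (H.inv a)]
        _ = H.mul (H.α (H.α a)) (H.α (H.α (H.inv a))) := by
            rw [H.mul_inv, H.one_mul]
        _ = H.α (H.α (H.mul a (H.inv a))) := by rw [H.α_mul, H.α_mul]
        _ = H.one := by rw [H.mul_inv, H.α_one, H.α_one]
    rw [key, H.α_one]
  · apply H.α.injective
    have key : H.α (H.mul (H.mul (H.inv b) (H.inv a)) (H.mul a b)) = H.one := by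
      calc H.α (H.mul (H.mul (H.inv b) (H.inv a)) (H.mul a b))
          = H.mul (H.mul (H.α (H.inv b)) (H.α (H.inv a))) (H.α (H.mul a b)) := by
            rw [H.α_mul, H.α_mul]
        _ = H.mul (H.α (H.α (H.inv b))) (H.mul (H.α (H.inv a)) (H.mul a b)) :=
            by rw [← H.hom_assoc (H.α (H.inv b)) (H.α (H.inv a)) (H.mul a b)]
        _ = H.mul (H.α (H.α (H.inv b))) (H.mul (H.mul (H.inv a) a) (H.α b)) := by
            rw [H.hom_assoc (H.inv a) a b]
        _ = H.mul (H.α (H.α (H.inv b))) (H.α (H.α b)) := by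
            rw [H.inv_mul, H.one_mul]
        _ = H.α (H.α (H.mul (H.inv b) b)) := by rw [H.α_mul, H.α_mul]
        _ = H.one := by rw [H.inv_mul, H.α_one, H.α_one]
    rw [key, H.α_one]
end

section
/- Every Hom-group (G, α) is a quasigroup: for all a, b ∈ G there exist unique x, y ∈ G with a x = b and y a = b. Explicitly x = α⁻¹(a⁻¹) α⁻²(b) and y = α⁻²(b) α⁻¹(a⁻¹). -/
theorem homGroup_symm_mul {G : Type*} (H : HomGroup G) (g k : G) :
    H.α.symm (H.mul g k) = H.mul (H.α.symm g) (H.α.symm k) := by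
  apply H.α.injective
  rw [H.α_mul, H.α.apply_symm_apply, H.α.apply_symm_apply, H.α.apply_symm_apply]

theorem homGroup_symm_one {G : Type*} (H : HomGroup G) :
    H.α.symm H.one = H.one := by
  apply H.α.injective
  rw [H.α.apply_symm_apply, H.α_one]

/-- any solution of a x = b is the canonical one -/
theorem homGroup_left_sol {G : Type*} (H : HomGroup G) (a b x : G)
    (hx : H.mul a x = b) :
    x = H.α.symm (H.α.symm (H.mul (H.α (H.inv a)) b)) := by
  have key : H.mul (H.α (H.inv a)) (H.mul a x) = H.α (H.α x) := by
    rw [H.hom_assoc, H.inv_mul, H.one_mul]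
  rw [hx] at key
  rw [key, H.α.symm_apply_apply, H.α.symm_apply_apply]

theorem homGroup_right_sol {G : Type*} (H : HomGroup G) (a b y : G)
    (hy : H.mul y a = b) :
    y = H.α.symm (H.α.symm (H.mul b (H.α (H.inv a)))) := by
  have key : H.mul (H.mul y a) (H.α (H.inv a)) = H.α (H.α y) := by
    rw [← H.hom_assoc, H.mul_inv, H.mul_one]
  rw [hy] at key
  rw [key, H.α.symm_apply_apply, H.α.symm_apply_apply]

/-- Every Hom-group is a quasigroup: the equations `a x = b` and `y a = b` have
unique solutions, given explicitly by `x = α⁻¹(a⁻¹) α⁻²(b)` and `y = α⁻²(b) α⁻¹(a⁻¹)`. -/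
theorem homGroup_quasigroup {G : Type*} (H : HomGroup G) (a b : G) :
    (∃! x, H.mul a x = b) ∧ (∃! y, H.mul y a = b) ∧
    H.mul a (H.mul (H.α.symm (H.inv a)) (H.α.symm (H.α.symm b))) = b ∧
    H.mul (H.mul (H.α.symm (H.α.symm b)) (H.α.symm (H.inv a))) a = b := by
  have hx : H.mul a (H.mul (H.α.symm (H.inv a)) (H.α.symm (H.α.symm b))) = b := by
    have h1 := H.hom_assoc (H.α.symm a) (H.α.symm (H.inv a)) (H.α.symm (H.α.symm b))
    rw [H.α.apply_symm_apply, H.α.apply_symm_apply] at h1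
    rw [h1, ← homGroup_symm_mul, H.mul_inv, homGroup_symm_one, H.one_mul,
      H.α.apply_symm_apply]
  have hy : H.mul (H.mul (H.α.symm (H.α.symm b)) (H.α.symm (H.inv a))) a = b := by
    have h1 := H.hom_assoc (H.α.symm (H.α.symm b)) (H.α.symm (H.inv a)) (H.α.symm a)
    rw [H.α.apply_symm_apply, H.α.apply_symm_apply] at h1
    rw [← h1, ← homGroup_symm_mul, H.inv_mul, homGroup_symm_one, H.mul_one,
      H.α.apply_symm_apply]
  refine ⟨⟨_, hx, fun x h => ?_⟩, ⟨_, hy, fun y h => ?_⟩, hx, hy⟩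
  · rw [homGroup_left_sol H a b x h,
      homGroup_left_sol H a b _ hx]
  · rw [homGroup_right_sol H a b y h,
      homGroup_right_sol H a b _ hy]
end

section
/- In a Hom-group (G, α), left cancellation holds: if g h₁ = g h₂ then h₁ = h₂. Similarly right cancellation holds: if h₁ g = h₂ g then h₁ = h₂. -/
/-- Left and right cancellation in a Hom-group. -/
theorem homGroup_cancel {G : Type*} (H : HomGroup G) (g : G) :
    (∀ h₁ h₂, H.mul g h₁ = H.mul g h₂ → h₁ = h₂) ∧
    (∀ h₁ h₂, H.mul h₁ g = H.mul h₂ g → h₁ = h₂) := by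
  constructor
  · intro h₁ h₂ e
    have key : ∀ h, H.mul (H.α (H.inv g)) (H.mul g h) = H.α (H.α h) := by
      intro h
      rw [H.hom_assoc, H.inv_mul, H.one_mul]
    have : H.α (H.α h₁) = H.α (H.α h₂) := by rw [← key, ← key, e]
    exact H.α.injective (H.α.injective this)
  · intro h₁ h₂ e
    have key : ∀ h, H.mul (H.mul h g) (H.α (H.inv g)) = H.α (H.α h) := by
      intro h
      rw [← H.hom_assoc, H.mul_inv, H.mul_one]
    have : H.α (H.α h₁) = H.α (H.α h₂) := by rw [← key, ← key, e]
    exact H.α.injective (H.α.injective this)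
end

section
/- The center Z(G) = { x ∈ G : xy = yx for all y ∈ G } of a Hom-group (G, α) is a Hom-subgroup of G: it contains 1, is closed under multiplication, closed under inverses, and closed under α. -/
/-- The center of a Hom-group is a Hom-subgroup: it contains the unit, and is
closed under multiplication, inversion, and the twisting map. -/
theorem homGroup_center_subgroup {G : Type*} (H : HomGroup G) :
    let Z : Set G := {x | ∀ y, H.mul x y = H.mul y x}
    H.one ∈ Z ∧
    (∀ x ∈ Z, ∀ y ∈ Z, H.mul x y ∈ Z) ∧
    (∀ x ∈ Z, H.inv x ∈ Z) ∧
    (∀ x ∈ Z, H.α x ∈ Z) := by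
  intro Z
  have cancel : ∀ a b c : G, H.mul a b = H.mul a c → b = c := by
    intro a b c h
    have h2 : H.mul (H.α (H.inv a)) (H.mul a b)
        = H.mul (H.α (H.inv a)) (H.mul a c) := by rw [h]
    rw [H.hom_assoc, H.hom_assoc, H.inv_mul, H.one_mul, H.one_mul] at h2
    exact H.α.injective (H.α.injective h2)
  refine ⟨?_, ?_, ?_, ?_⟩
  · intro y; rw [H.one_mul, H.mul_one]
  · intro x hx y hy z
    obtain ⟨w, rfl⟩ : ∃ w, H.α w = z := ⟨H.α.symm z, H.α.apply_symm_apply z⟩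
    calc H.mul (H.mul x y) (H.α w) = H.mul (H.α x) (H.mul y w) := (H.hom_assoc x y w).symm
      _ = H.mul (H.α x) (H.mul w y) := by rw [hy w]
      _ = H.mul (H.mul x w) (H.α y) := H.hom_assoc x w y
      _ = H.mul (H.mul w x) (H.α y) := by rw [hx w]
      _ = H.mul (H.α w) (H.mul x y) := (H.hom_assoc w x y).symm
  · intro x hx y
    apply cancel (H.α x)
    calc H.mul (H.α x) (H.mul (H.inv x) y)
        = H.mul (H.mul x (H.inv x)) (H.α y) := H.hom_assoc x (H.inv x) y
      _ = H.α (H.α y) := by rw [H.mul_inv, H.one_mul]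
      _ = H.mul (H.α y) (H.mul x (H.inv x)) := by rw [H.mul_inv, H.mul_one]
      _ = H.mul (H.mul y x) (H.α (H.inv x)) := H.hom_assoc y x (H.inv x)
      _ = H.mul (H.mul x y) (H.α (H.inv x)) := by rw [hx y]
      _ = H.mul (H.α x) (H.mul y (H.inv x)) := (H.hom_assoc x y (H.inv x)).symm
  · intro x hx y
    obtain ⟨w, rfl⟩ : ∃ w, H.α w = y := ⟨H.α.symm y, H.α.apply_symm_apply y⟩
    rw [← H.α_mul, ← H.α_mul, hx w]
end

section
/- For any element x of a Hom-group (G, α), the centralizer C_G(x) = { g ∈ G : gx = xg } is a Hom-subgroup of G, provided α(x) = x or more generally C_G(x) is closed under α; in particular, if x satisfies α(x) = x then C_G(x) contains 1 and is closed under multiplication and inverses. -/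
/-- Left cancellation in a Hom-group. -/
theorem homGroup_cancel_left {G : Type*} (H : HomGroup G) {a b c : G}
    (h : H.mul a b = H.mul a c) : b = c := by
  have key : ∀ y : G, H.mul (H.α (H.inv a)) (H.mul a y) = H.α (H.α y) := by
    intro y
    rw [H.hom_assoc, H.inv_mul, H.one_mul]
  have := congrArg (fun z => H.mul (H.α (H.inv a)) z) h
  simp only [key] at this
  exact H.α.injective (H.α.injective this)

/-- The centralizer of an element `x` fixed by `α` is a Hom-subgroup: it contains
the unit, and is closed under multiplication, inversion, and the twisting map. -/
theorem homGroup_centralizer_subgroup {G : Type*} (H : HomGroup G) (x : G)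
    (hx : H.α x = x) :
    let C : Set G := {g | H.mul g x = H.mul x g}
    H.one ∈ C ∧
    (∀ g ∈ C, ∀ k ∈ C, H.mul g k ∈ C) ∧
    (∀ g ∈ C, H.inv g ∈ C) ∧
    (∀ g ∈ C, H.α g ∈ C) := by
  intro C
  refine ⟨?_, ?_, ?_, ?_⟩
  · show H.mul H.one x = H.mul x H.one
    rw [H.one_mul, H.mul_one]
  · intro g hg k hk
    show H.mul (H.mul g k) x = H.mul x (H.mul g k)
    calc H.mul (H.mul g k) x = H.mul (H.mul g k) (H.α x) := by rw [hx]
      _ = H.mul (H.α g) (H.mul k x) := (H.hom_assoc g k x).symm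
      _ = H.mul (H.α g) (H.mul x k) := by rw [hk]
      _ = H.mul (H.mul g x) (H.α k) := H.hom_assoc g x k
      _ = H.mul (H.mul x g) (H.α k) := by rw [hg]
      _ = H.mul (H.α x) (H.mul g k) := (H.hom_assoc x g k).symm
      _ = H.mul x (H.mul g k) := by rw [hx]
  · intro g hg
    show H.mul (H.inv g) x = H.mul x (H.inv g)
    apply homGroup_cancel_left H (a := H.α g)
    have h1 : H.mul (H.α g) (H.mul (H.inv g) x) = x := by
      rw [H.hom_assoc, H.mul_inv, H.one_mul, hx, hx]
    have h2 : H.mul (H.α g) (H.mul x (H.inv g)) = x := by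
      rw [H.hom_assoc]
      have h3 : H.mul (H.mul g x) (H.α (H.inv g)) = H.mul (H.α x) (H.mul g (H.inv g)) := by
        rw [hg, ← H.hom_assoc]
      rw [h3, H.mul_inv, H.mul_one, hx, hx]
    rw [h1, h2]
  · intro g hg
    show H.mul (H.α g) x = H.mul x (H.α g)
    calc H.mul (H.α g) x = H.mul (H.α g) (H.α x) := by rw [hx]
      _ = H.α (H.mul g x) := (H.α_mul g x).symm
      _ = H.α (H.mul x g) := by rw [hg]
      _ = H.mul (H.α x) (H.α g) := H.α_mul x g
      _ = H.mul x (H.α g) := by rw [hx]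
end

section
/- In a Hom-group (G, α), if x commutes with every element (x ∈ Z(G)), then so does x⁻¹; i.e. x⁻¹ a = a x⁻¹ for all a ∈ G. -/
/-- If `x` commutes with every element of a Hom-group, then so does `x⁻¹`. -/
theorem homGroup_inv_central {G : Type*} (H : HomGroup G) (x : G)
    (hx : ∀ y, H.mul x y = H.mul y x) :
    ∀ a, H.mul (H.inv x) a = H.mul a (H.inv x) := by
  -- right multiplication by α x is injective
  have hcancel : ∀ d e : G, H.mul d (H.α x) = H.mul e (H.α x) → d = e := by
    intro d e h
    have key : ∀ c : G, H.mul (H.mul c (H.α x)) (H.α (H.α (H.inv x)))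
        = H.α (H.α c) := by
      intro c
      rw [← H.hom_assoc, ← H.α_mul, H.mul_inv, H.α_one, H.mul_one]
    have h2 : H.α (H.α d) = H.α (H.α e) := by
      rw [← key d, ← key e, h]
    exact H.α.injective (H.α.injective h2)
  intro a
  apply hcancel
  have h1 : H.mul (H.mul (H.inv x) a) (H.α x) = H.α (H.α a) := by
    rw [← H.hom_assoc, ← hx, H.hom_assoc, H.inv_mul, H.one_mul]
  have h2 : H.mul (H.mul a (H.inv x)) (H.α x) = H.α (H.α a) := by
    rw [← H.hom_assoc, H.inv_mul, H.mul_one]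
  rw [h1, h2]
end

section
/- Let (G, α) be a finite Hom-group and H a Hom-subgroup of G. Then for every g ∈ G the left coset gH = { gh : h ∈ H } has the same cardinality as H. -/
/-- In a finite Hom-group, every left coset `gH` of a Hom-subgroup `H` has the
same cardinality as `H`. -/
theorem homGroup_coset_card {G : Type*} [Finite G] (HG : HomGroup G) (H : Set G)
    (h_one : HG.one ∈ H)
    (h_mul : ∀ x ∈ H, ∀ y ∈ H, HG.mul x y ∈ H)
    (h_inv : ∀ x ∈ H, HG.inv x ∈ H)
    (h_α : HG.α '' H = H) :
    ∀ g : G, Set.ncard ((fun h => HG.mul g h) '' H) = Set.ncard H := by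
  intro g
  apply Set.ncard_image_of_injective
  intro h h' hh
  have key := congrArg (HG.mul (HG.α (HG.inv g))) hh
  rw [HG.hom_assoc, HG.hom_assoc, HG.inv_mul, HG.one_mul, HG.one_mul] at key
  exact HG.α.injective (HG.α.injective key)
end

section
/- Let (G, α) be a Hom-group and H a Hom-subgroup with α(H) = H. If two left cosets xH and yH intersect (xH ∩ yH ≠ ∅), then xH = yH. -/
/-- Two left cosets of a Hom-subgroup that intersect are equal. -/
theorem homGroup_coset_disjoint {G : Type*} (HG : HomGroup G) (H : Set G)
    (h_one : HG.one ∈ H)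
    (h_mul : ∀ x ∈ H, ∀ y ∈ H, HG.mul x y ∈ H)
    (h_inv : ∀ x ∈ H, HG.inv x ∈ H)
    (h_α : HG.α '' H = H) (x y : G)
    (h : (((fun h => HG.mul x h) '' H) ∩ ((fun h => HG.mul y h) '' H)).Nonempty) :
    (fun h => HG.mul x h) '' H = (fun h => HG.mul y h) '' H := by
  -- image under α of a coset
  have imgA : ∀ u : G, HG.α '' ((fun h => HG.mul u h) '' H)
      = (fun h => HG.mul (HG.α u) h) '' H := by
    intro u
    rw [← Set.image_comp]
    conv_rhs => rw [← h_α, ← Set.image_comp]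
    apply Set.image_congr
    intro a _
    exact HG.α_mul u a
  -- key subset lemma
  have key : ∀ a b ha hb : G, ha ∈ H → hb ∈ H → HG.mul a ha = HG.mul b hb →
      ((fun h => HG.mul (HG.α (HG.α a)) h) '' H)
        ⊆ ((fun h => HG.mul (HG.α (HG.α b)) h) '' H) := by
    intro a b ha hb haH hbH heq
    have hk : HG.mul hb (HG.inv ha) ∈ H := h_mul _ hbH _ (h_inv _ haH)
    have e1 : HG.α (HG.α a) = HG.mul (HG.α b) (HG.mul hb (HG.inv ha)) := by
      have h0 := HG.hom_assoc a ha (HG.inv ha)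
      rw [HG.mul_inv, HG.mul_one, heq, ← HG.hom_assoc b hb (HG.inv ha)] at h0
      exact h0
    rintro _ ⟨hh, hhH, rfl⟩
    have : hh ∈ HG.α '' H := by rw [h_α]; exact hhH
    obtain ⟨c, hcH, rfl⟩ := this
    refine ⟨HG.mul (HG.mul hb (HG.inv ha)) c, h_mul _ hk _ hcH, ?_⟩
    simp only [e1]
    exact (HG.hom_assoc (HG.α b) (HG.mul hb (HG.inv ha)) c).symm ▸
      (HG.hom_assoc (HG.α b) (HG.mul hb (HG.inv ha)) c)
  obtain ⟨z, ⟨h₁, h₁H, hz1⟩, ⟨h₂, h₂H, hz2⟩⟩ := h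
  have heq : HG.mul x h₁ = HG.mul y h₂ := hz1.trans hz2.symm
  have inj : Function.Injective (Set.image HG.α) :=
    Set.image_injective.mpr HG.α.injective
  apply inj; apply inj
  rw [imgA, imgA, imgA, imgA]
  exact Set.Subset.antisymm (key x y h₁ h₂ h₁H h₂H heq) (key y x h₂ h₁ h₂H h₁H heq.symm)
end

section
/- Lagrange's theorem for Hom-groups: if (G, α) is a finite Hom-group and H is a Hom-subgroup of G, then the cardinality of H divides the cardinality of G. -/
lemma HomGroup.symm_mul {G : Type*} (HG : HomGroup G) (x y : G) :
    HG.α.symm (HG.mul x y) = HG.mul (HG.α.symm x) (HG.α.symm y) := by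
  apply HG.α.injective
  rw [Equiv.apply_symm_apply, HG.α_mul, Equiv.apply_symm_apply, Equiv.apply_symm_apply]

lemma HomGroup.symm_one {G : Type*} (HG : HomGroup G) : HG.α.symm HG.one = HG.one := by
  apply HG.α.injective
  rw [Equiv.apply_symm_apply, HG.α_one]

/-- Untwisting a Hom-group yields a genuine group. -/
def HomGroup.toGroup {G : Type*} (HG : HomGroup G) : Group G :=
  letI : Mul G := ⟨fun a b => HG.α.symm (HG.mul a b)⟩
  letI : One G := ⟨HG.one⟩
  letI : Inv G := ⟨HG.inv⟩
  Group.ofLeftAxioms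
    (by
      intro a b c
      show HG.α.symm (HG.mul (HG.α.symm (HG.mul a b)) c)
          = HG.α.symm (HG.mul a (HG.α.symm (HG.mul b c)))
      congr 1
      conv_lhs => rw [HG.symm_mul, ← Equiv.apply_symm_apply HG.α c]
      conv_rhs => rw [HG.symm_mul, ← Equiv.apply_symm_apply HG.α a]
      exact (HG.hom_assoc _ _ _).symm)
    (by
      intro a
      show HG.α.symm (HG.mul HG.one a) = a
      rw [HG.one_mul, Equiv.symm_apply_apply])
    (by
      intro a
      show HG.α.symm (HG.mul (HG.inv a) a) = HG.one
      rw [HG.inv_mul, HG.symm_one])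

/-- Lagrange's theorem for Hom-groups: the cardinality of a Hom-subgroup of a
finite Hom-group divides the cardinality of the Hom-group. -/
theorem homGroup_lagrange {G : Type*} [Finite G] (HG : HomGroup G) (H : Set G)
    (h_one : HG.one ∈ H)
    (h_mul : ∀ x ∈ H, ∀ y ∈ H, HG.mul x y ∈ H)
    (h_inv : ∀ x ∈ H, HG.inv x ∈ H)
    (h_α : HG.α '' H = H) :
    Set.ncard H ∣ Nat.card G := by
  letI := HG.toGroup
  have hsymm : ∀ x ∈ H, HG.α.symm x ∈ H := by
    intro x hx
    rw [← h_α] at hx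
    obtain ⟨y, hy, rfl⟩ := hx
    rwa [Equiv.symm_apply_apply]
  let S : Subgroup G :=
    { carrier := H
      mul_mem' := fun {a b} ha hb => hsymm _ (h_mul a ha b hb)
      one_mem' := h_one
      inv_mem' := fun {a} ha => h_inv a ha }
  have : Nat.card S ∣ Nat.card G := Subgroup.card_subgroup_dvd_card S
  have h2 : Nat.card H ∣ Nat.card G := this
  rwa [Nat.card_coe_set_eq] at h2
end

section
/- In a Hom-group (G, α), the element 1 is idempotent (1·1 = 1), and the Hom-group is a loop (i.e. 1 is a two-sided identity: 1x = x1 = x for all x) if and only if α is the identity map, in which case G is a group. -/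
/-- In a Hom-group, `1` is idempotent, and `1` is a two-sided identity (i.e. the
Hom-group is a loop) iff `α` is the identity map, in which case the multiplication
is associative, so `G` is a group. -/
theorem homGroup_loop_iff_group {G : Type*} (H : HomGroup G) :
    H.mul H.one H.one = H.one ∧
    ((∀ x, H.mul H.one x = x ∧ H.mul x H.one = x) ↔ ∀ x, H.α x = x) ∧
    ((∀ x, H.α x = x) → ∀ a b c, H.mul (H.mul a b) c = H.mul a (H.mul b c)) := by
  refine ⟨by rw [H.mul_one, H.α_one], ⟨fun h x => ?_, fun h x => ?_⟩, fun h a b c => ?_⟩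
  · rw [← H.one_mul x, (h x).1]
  · exact ⟨by rw [H.one_mul, h], by rw [H.mul_one, h]⟩
  · have := H.hom_assoc a b c
    rw [h a, h c] at this
    exact this.symm
end

section
/- There is, up to isomorphism, exactly one Hom-group of order 3 with twisting map not equal to the identity: on G = {1, a, b} the multiplication must be 1·1=1, 1·a=a·1=b, 1·b=b·1=a, a·a=a, a·b=b·a=1, b·b=b, with α(a)=b, α(b)=a; and this structure indeed satisfies all Hom-group axioms. -/
/-- The multiplication table of the unique Hom-group of order 3 with nontrivial
twisting map, on `{1, a, b}` encoded as `{0, 1, 2} = Fin 3`: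
`1·1=1, 1·a=a·1=b, 1·b=b·1=a, a·a=a, a·b=b·a=1, b·b=b`. -/
def homGroup3Mul : Fin 3 → Fin 3 → Fin 3
  | 0, 0 => 0 | 0, 1 => 2 | 0, 2 => 1
  | 1, 0 => 2 | 1, 1 => 1 | 1, 2 => 0
  | 2, 0 => 1 | 2, 1 => 0 | 2, 2 => 2

/-- The twisting map of the unique Hom-group of order 3 with nontrivial twisting:
`α(1)=1, α(a)=b, α(b)=a`. -/
def homGroup3Alpha : Fin 3 → Fin 3
  | 0 => 0 | 1 => 2 | 2 => 1

/-- A generic candidate multiplication table whose border rows/columns agree with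
the Hom-unitality constraints, with free entries `p q r s`. -/
def homGroup3Cand (p q r s : Fin 3) : Fin 3 → Fin 3 → Fin 3 := fun x y =>
  if x = 0 then homGroup3Alpha y
  else if y = 0 then homGroup3Alpha x
  else if x = 1 then (if y = 1 then p else q)
  else (if y = 1 then r else s)

lemma homGroup3_key : ∀ p q r s : Fin 3,
    (∀ g h k, homGroup3Cand p q r s (homGroup3Alpha g) (homGroup3Cand p q r s h k) =
      homGroup3Cand p q r s (homGroup3Cand p q r s g h) (homGroup3Alpha k)) →
    (∀ g k, homGroup3Alpha (homGroup3Cand p q r s g k) =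
      homGroup3Cand p q r s (homGroup3Alpha g) (homGroup3Alpha k)) →
    (∀ g, ∃ h, homGroup3Cand p q r s g h = 0 ∧ homGroup3Cand p q r s h g = 0) →
    ∀ x y, homGroup3Cand p q r s x y = homGroup3Mul x y := by decide

lemma homGroup3Alpha_invol : ∀ x, homGroup3Alpha (homGroup3Alpha x) = x := by decide

/-- The model Hom-group of order 3. -/
def homGroup3 : HomGroup (Fin 3) where
  mul := homGroup3Mul
  one := 0
  α := ⟨homGroup3Alpha, homGroup3Alpha, homGroup3Alpha_invol, homGroup3Alpha_invol⟩
  hom_assoc := by decide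
  α_mul := by decide
  mul_one := by decide
  one_mul := by decide
  α_one := by decide
  inv := homGroup3Alpha
  mul_inv := by decide
  inv_mul := by decide

/-- Up to isomorphism there is exactly one Hom-group of order 3 whose twisting map
is not the identity: the table `homGroup3Mul` with twisting `homGroup3Alpha` does
define a Hom-group, and any Hom-group of order 3 with nontrivial twisting map is
isomorphic to it. -/
theorem homGroup_order_three_classification :
    (∃ K : HomGroup (Fin 3), K.one = 0 ∧ (∀ x y, K.mul x y = homGroup3Mul x y) ∧
      (∀ x, K.α x = homGroup3Alpha x)) ∧
    (∀ (G : Type) [Fintype G] (H : HomGroup G), Fintype.card G = 3 →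
      H.α ≠ Equiv.refl G →
      ∃ f : G ≃ Fin 3, f H.one = 0 ∧
        (∀ x y, f (H.mul x y) = homGroup3Mul (f x) (f y)) ∧
        (∀ x, f (H.α x) = homGroup3Alpha (f x))) := by
  constructor
  · exact ⟨homGroup3, rfl, fun _ _ => rfl, fun _ => rfl⟩
  · intro G _ H hcard hα
    have hex : ∃ a : G, H.α a ≠ a := by
      by_contra hc
      push_neg at hc
      exact hα (Equiv.ext fun x => hc x)
    obtain ⟨a, ha⟩ := hex
    obtain ⟨b, hb⟩ : ∃ b, H.α a = b := ⟨_, rfl⟩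
    have hαe : H.α H.one = H.one := H.α_one
    have hae : a ≠ H.one := fun h => ha (by rw [h, hαe])
    have hba : b ≠ a := hb ▸ ha
    have hbe : b ≠ H.one := fun h =>
      hae (H.α.injective (by rw [hb, h, hαe]))
    classical
    -- every element of G is H.one, a, or b
    have hall : ∀ g : G, g = H.one ∨ g = a ∨ g = b := by
      intro g
      have hS : ({H.one, a, b} : Finset G).card = 3 := by
        rw [Finset.card_insert_of_notMem (by simp [hae.symm, hbe.symm]),
          Finset.card_insert_of_notMem (by simp [hba.symm]), Finset.card_singleton]
      have huniv : ({H.one, a, b} : Finset G) = Finset.univ :=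
        Finset.eq_univ_of_card _ (by rw [hS, hcard])
      have : g ∈ ({H.one, a, b} : Finset G) := huniv ▸ Finset.mem_univ g
      simpa using this
    have hαb : H.α b = a := by
      rcases hall (H.α b) with h | h | h
      · exact absurd (H.α.injective (h.trans hαe.symm)) hbe
      · exact h
      · exact absurd (H.α.injective (h.trans hb.symm)) hba
    let E : Fin 3 ≃ G :=
      { toFun := ![H.one, a, b]
        invFun := fun g => if g = H.one then 0 else if g = a then 1 else 2
        left_inv := by
          intro i
          fin_cases i <;> simp [hae, hba, hbe]
        right_inv := by
          intro g
          rcases hall g with h | h | h <;> subst h <;> simp [hae, hba, hbe] }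
    have hE0 : E 0 = H.one := rfl
    have hE1 : E 1 = a := rfl
    have hE2 : E 2 = b := rfl
    have hαE : ∀ i, H.α (E i) = E (homGroup3Alpha i) := by
      intro i
      fin_cases i
      · simpa [hE0, homGroup3Alpha] using hαe
      · simpa [hE1, hE2, homGroup3Alpha] using hb
      · simpa [hE2, hE1, homGroup3Alpha] using hαb
    set m : Fin 3 → Fin 3 → Fin 3 := fun x y => E.symm (H.mul (E x) (E y)) with hm
    have hmE : ∀ x y, H.mul (E x) (E y) = E (m x y) := by
      intro x y; rw [hm]; simp
    have hαs : ∀ i, E.symm (H.α (E i)) = homGroup3Alpha i := by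
      intro i; rw [hαE]; simp
    have h10 : ∀ g, m g 0 = homGroup3Alpha g := by
      intro g; rw [hm]; simp only [hE0]
      rw [H.mul_one, ← hαs g]
    have h01 : ∀ g, m 0 g = homGroup3Alpha g := by
      intro g; rw [hm]; simp only [hE0]
      rw [H.one_mul, ← hαs g]
    have hcand : ∀ x y, m x y = homGroup3Cand (m 1 1) (m 1 2) (m 2 1) (m 2 2) x y := by
      intro x y
      fin_cases x <;> fin_cases y <;>
        simp [homGroup3Cand, h10, h01, homGroup3Alpha]
    have hassoc : ∀ g h k, m (homGroup3Alpha g) (m h k) = m (m g h) (homGroup3Alpha k) := by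
      intro g h k
      rw [hm]
      simp only []
      rw [← hαE, ← hαE, ← hmE, ← hmE, H.hom_assoc]
    have hamul : ∀ g k, homGroup3Alpha (m g k) = m (homGroup3Alpha g) (homGroup3Alpha k) := by
      intro g k
      rw [← hαs (m g k), ← hmE, H.α_mul, hαE, hαE, hmE]
      simp
    have hinv : ∀ g, ∃ h, m g h = 0 ∧ m h g = 0 := by
      intro g
      refine ⟨E.symm (H.inv (E g)), ?_, ?_⟩
      · rw [hm]; simp only [Equiv.apply_symm_apply]
        rw [H.mul_inv, ← hE0, Equiv.symm_apply_apply]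
      · rw [hm]; simp only [Equiv.apply_symm_apply]
        rw [H.inv_mul, ← hE0, Equiv.symm_apply_apply]
    have hfinal : ∀ x y, m x y = homGroup3Mul x y := by
      intro x y
      rw [hcand x y]
      refine homGroup3_key _ _ _ _ ?_ ?_ ?_ x y
      · intro g h k
        rw [← hcand, ← hcand, ← hcand, ← hcand]; exact hassoc g h k
      · intro g k
        rw [← hcand, ← hcand]; exact hamul g k
      · intro g
        obtain ⟨h, h1, h2⟩ := hinv g
        exact ⟨h, by rw [← hcand]; exact h1, by rw [← hcand]; exact h2⟩
    refine ⟨E.symm, ?_, ?_, ?_⟩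
    · rw [← hE0, Equiv.symm_apply_apply]
    · intro x y
      rw [← hfinal (E.symm x) (E.symm y), hm]
      simp
    · intro x
      rw [← hαs (E.symm x)]
      simp
end
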